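/- For the root system A_{n-1} (Weyl group S_n), the generalized Chebyshev polynomial of the highest root ρ₀ = ϖ₁ + ϖ_{n−1} satisfies the identity n·z₁·z_{n−1} = (n−1)·T_{ϖ₁+ϖ_{n−1}}(z) + 1, where z₁ = T_{ϖ₁} and z_{n−1} = T_{ϖ_{n−1}}. Consequently, since z_{n−1} = conj(z₁) on the Chebyshev image, min over the image of T_{ρ₀} equals min (n|z₁|² − 1)/(n−1) ≥ −1/(n−1), and the spectral bound gives χ(Λ(A_{n−1})) ≥ n. -/

import Mathlib

noncomputable section
open scoped BigOperators

abbrev EV (n : ℕ) := EuclideanSpace ℝ (Fin n)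

/-- The Weyl group of `A_{n−1}` is `Sₙ`, acting on `ℝⁿ` by permuting coordinates. -/
def permAct {n : ℕ} (p : Equiv.Perm (Fin n)) (μ : EV n) : EV n := WithLp.toLp 2 (fun j => μ (p j))

/-- The generalized cosine for the Weyl group `Sₙ` of `A_{n−1}`. -/
def aGencos {n : ℕ} (μ u : EV n) : ℂ :=
  ((Fintype.card (Equiv.Perm (Fin n)) : ℂ))⁻¹ *
    ∑ p : Equiv.Perm (Fin n),
      Complex.exp (-(2 * Real.pi * Complex.I) * ((inner ℝ (permAct p μ) u : ℝ) : ℂ))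

/-- The fundamental weight `ϖ₁ = e₁ − (1/n)·(1,…,1)` of `A_{n−1}`. -/
def aϖ₁ {n : ℕ} : EV n := WithLp.toLp 2 (fun j : Fin n => (if (j : ℕ) = 0 then 1 - 1 / n else -(1 / n) : ℝ))

/-- The fundamental weight `ϖ_{n−1} = (1/n)·(1,…,1) − eₙ` of `A_{n−1}`. -/
def aϖlast {n : ℕ} : EV n := WithLp.toLp 2 (fun j : Fin n => (if (j : ℕ) = n - 1 then 1 / n - 1 else 1 / n : ℝ))

/-! ### Auxiliary lemmas -/

/-- `eᵃ − eᵇ` as a vector. -/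
def dlt {n : ℕ} (a b : Fin n) : EV n :=
  WithLp.toLp 2 (fun j => (if j = a then (1:ℝ) else 0) - (if j = b then 1 else 0))

lemma permAct_permAct {n : ℕ} (p q : Equiv.Perm (Fin n)) (μ : EV n) :
    permAct p (permAct q μ) = permAct (q * p) μ := rfl

lemma aGencos_perm {n : ℕ} (q : Equiv.Perm (Fin n)) (μ u : EV n) :
    aGencos (permAct q μ) u = aGencos μ u := by
  unfold aGencos
  congr 1
  rw [← Equiv.sum_comp (Equiv.mulLeft q)
    (fun p => Complex.exp (-(2 * Real.pi * Complex.I) * ((inner ℝ (permAct p μ) u : ℝ) : ℂ)))]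
  simp only [Equiv.coe_mulLeft, permAct_permAct]

lemma aGencos_zero {n : ℕ} (u : EV n) : aGencos (0 : EV n) u = 1 := by
  unfold aGencos
  have h : ∀ p : Equiv.Perm (Fin n), permAct p (0 : EV n) = 0 := fun p => rfl
  simp [h, Finset.sum_const]

lemma aGencos_neg {n : ℕ} (μ u : EV n) :
    aGencos (-μ) u = starRingEnd ℂ (aGencos μ u) := by
  unfold aGencos
  rw [map_mul, map_inv₀, map_natCast, map_sum]
  congr 1
  refine Finset.sum_congr rfl fun p _ => ?_
  rw [← Complex.exp_conj]
  congr 1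
  have h : permAct p (-μ) = -(permAct p μ) := rfl
  rw [h, inner_neg_left]
  simp only [map_mul, map_neg, Complex.conj_I, Complex.conj_ofReal, map_ofNat]
  push_cast
  ring

lemma aGencos_mul {n : ℕ} (μ ν u : EV n) :
    aGencos μ u * aGencos ν u =
      ((Fintype.card (Equiv.Perm (Fin n)) : ℂ))⁻¹ *
        ∑ r : Equiv.Perm (Fin n), aGencos (μ + permAct r ν) u := by
  set c : ℂ := ((Fintype.card (Equiv.Perm (Fin n)) : ℂ))⁻¹ with hc
  set E : EV n → ℂ := fun x => Complex.exp (-(2 * Real.pi * Complex.I) * ((inner ℝ x u : ℝ) : ℂ))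
    with hE
  have key : ∀ (p r : Equiv.Perm (Fin n)),
      E (permAct p μ) * E (permAct (r * p) ν) = E (permAct p (μ + permAct r ν)) := by
    intro p r
    have h1 : permAct (r * p) ν = permAct p (permAct r ν) := rfl
    have h2 : permAct p (μ + permAct r ν) = permAct p μ + permAct p (permAct r ν) := rfl
    rw [h1, h2, hE]
    simp only [← Complex.exp_add]
    congr 1
    rw [inner_add_left]
    push_cast
    ring
  calc aGencos μ u * aGencos ν u
      = c * c * ∑ p : Equiv.Perm (Fin n), (E (permAct p μ) * ∑ q, E (permAct q ν)) := by
        unfold aGencos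
        rw [← hc, mul_mul_mul_comm]
        congr 1
        rw [Finset.sum_mul]
    _ = c * c * ∑ p : Equiv.Perm (Fin n), ∑ r : Equiv.Perm (Fin n),
          E (permAct p (μ + permAct r ν)) := by
        congr 1
        refine Finset.sum_congr rfl fun p _ => ?_
        rw [Finset.mul_sum,
          ← Equiv.sum_comp (Equiv.mulRight p) (fun q => E (permAct p μ) * E (permAct q ν))]
        exact Finset.sum_congr rfl fun r _ => key p r
    _ = c * ∑ r : Equiv.Perm (Fin n), aGencos (μ + permAct r ν) u := by
        rw [Finset.sum_comm]
        unfold aGencos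
        rw [← hc]
        conv_rhs => rw [Finset.mul_sum]
        rw [mul_assoc, Finset.mul_sum]
        rw [Finset.mul_sum]

lemma sum_perm_apply {m : ℕ} (F : Fin (m+1) → ℂ) (a : Fin (m+1)) :
    ∑ r : Equiv.Perm (Fin (m+1)), F (r a) = (m.factorial : ℂ) * ∑ i, F i := by
  have h1 : ∑ r : Equiv.Perm (Fin (m+1)), F (r a)
      = ∑ r : Equiv.Perm (Fin (m+1)), F (r 0) := by
    rw [← Equiv.sum_comp (Equiv.mulRight (Equiv.swap a 0)) (fun r => F (r a))]
    simp [Equiv.Perm.mul_apply]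
  rw [h1, ← Equiv.sum_comp (Equiv.Perm.decomposeFin.symm) (fun r => F (r 0))]
  rw [Fintype.sum_prod_type]
  simp only [Equiv.Perm.decomposeFin_symm_apply_zero, Finset.sum_const, Finset.card_univ,
    Fintype.card_perm, Fintype.card_fin, nsmul_eq_mul, ← Finset.sum_mul]
  rw [Finset.mul_sum]

lemma sum_perm_apply' {n : ℕ} (hn : 1 ≤ n) (F : Fin n → ℂ) (a : Fin n) :
    ∑ r : Equiv.Perm (Fin n), F (r a) = ((n-1).factorial : ℂ) * ∑ i, F i := by
  obtain ⟨m, rfl⟩ : ∃ m, n = m + 1 := ⟨n - 1, by omega⟩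
  simpa using sum_perm_apply F a

section
variable {n : ℕ} (hn : 2 ≤ n)
include hn

lemma weight_sum (r : Equiv.Perm (Fin n)) :
    haveI : NeZero n := ⟨by omega⟩
    (aϖ₁ + permAct r aϖlast : EV n) = dlt 0 (r⁻¹ ⟨n-1, by omega⟩) := by
  haveI : NeZero n := ⟨by omega⟩
  set L : Fin n := ⟨n - 1, by omega⟩ with hLdef
  ext j
  show aϖ₁ j + aϖlast (r j) = dlt 0 (r⁻¹ L) j
  have h0 : ((j : ℕ) = 0) ↔ (j = (0 : Fin n)) := by
    rw [Fin.ext_iff, Fin.val_zero]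
  have key : r j = L ↔ j = r⁻¹ L := by
    constructor <;> intro h
    · rw [← h]; simp
    · rw [h]; simp
  have hL : ((r j : ℕ) = n - 1) ↔ (j = r⁻¹ L) := by
    rw [← key, Fin.ext_iff, hLdef]
  unfold aϖ₁ aϖlast dlt
  simp only [h0, hL]
  by_cases h1 : j = (0 : Fin n) <;> by_cases h2 : j = r⁻¹ L
  · rw [if_pos h1, if_pos h2, if_pos h1, if_pos h2]; ring
  · rw [if_pos h1, if_neg h2, if_pos h1, if_neg h2]; ring
  · rw [if_neg h1, if_pos h2, if_neg h1, if_pos h2]; ring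
  · rw [if_neg h1, if_neg h2, if_neg h1, if_neg h2]; ring

omit hn in
lemma dlt_self {n : ℕ} (a : Fin n) : (dlt a a : EV n) = 0 := by
  ext j; show _ - _ = (0:ℝ); simp

lemma dlt_perm {b : Fin n} (hb : (b : ℕ) ≠ 0) :
    haveI : NeZero n := ⟨by omega⟩
    (dlt 0 b : EV n) = permAct (Equiv.swap b ⟨n-1, by omega⟩) (dlt 0 ⟨n-1, by omega⟩) := by
  haveI : NeZero n := ⟨by omega⟩
  set L : Fin n := ⟨n - 1, by omega⟩ with hLdef
  have hb' : b ≠ (0 : Fin n) := by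
    intro h; rw [h] at hb; simp at hb
  have hL0 : L ≠ (0 : Fin n) := by
    intro h; rw [Fin.ext_iff, hLdef, Fin.val_zero] at h; simp at h; omega
  ext j
  show _ = dlt 0 L (Equiv.swap b L j)
  unfold dlt
  have c1 : (Equiv.swap b L j = 0) ↔ (j = 0) := by
    rw [Equiv.swap_apply_eq_iff, Equiv.swap_apply_of_ne_of_ne (Ne.symm hb') (Ne.symm hL0)]
  have c2 : (Equiv.swap b L j = L) ↔ (j = b) := by
    rw [Equiv.swap_apply_eq_iff, Equiv.swap_apply_right]
  simp only [c1, c2]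

lemma aϖlast_eq :
    haveI : NeZero n := ⟨by omega⟩
    (aϖlast : EV n) = permAct (Equiv.swap 0 ⟨n-1, by omega⟩) (-aϖ₁) := by
  haveI : NeZero n := ⟨by omega⟩
  set L : Fin n := ⟨n - 1, by omega⟩ with hLdef
  ext j
  show aϖlast j = -(aϖ₁ (Equiv.swap 0 L j))
  have c1 : (((Equiv.swap 0 L j : Fin n) : ℕ) = 0) ↔ ((j : ℕ) = n - 1) := by
    rw [show (((Equiv.swap 0 L j : Fin n) : ℕ) = 0) ↔ (Equiv.swap 0 L j = (0 : Fin n)) by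
        rw [Fin.ext_iff, Fin.val_zero],
      Equiv.swap_apply_eq_iff, Equiv.swap_apply_left, Fin.ext_iff, hLdef]
  unfold aϖ₁ aϖlast
  simp only [c1]
  by_cases h : (j : ℕ) = n - 1 <;> simp [h]

lemma part2 (u : EV n) : aGencos aϖlast u = starRingEnd ℂ (aGencos aϖ₁ u) := by
  rw [aϖlast_eq hn, aGencos_perm, aGencos_neg]

set_option maxHeartbeats 1000000 in
lemma part1 (u : EV n) :
    (n : ℂ) * aGencos aϖ₁ u * aGencos aϖlast u
      = (n - 1 : ℂ) * aGencos (aϖ₁ + aϖlast) u + 1 := by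
  haveI : NeZero n := ⟨by omega⟩
  set L : Fin n := ⟨n - 1, by omega⟩ with hLdef
  set T : ℂ := aGencos (aϖ₁ + aϖlast) u with hT
  have hTL : aGencos (dlt (0 : Fin n) L) u = T := by
    rw [hT]
    congr 1
    have h := weight_sum hn (1 : Equiv.Perm (Fin n))
    simp only [inv_one, Equiv.Perm.one_apply] at h
    rw [← h]
    rfl
  have step1 : ∀ r : Equiv.Perm (Fin n), aGencos (aϖ₁ + permAct r aϖlast) u
      = (fun i : Fin n => if i = 0 then (1:ℂ) else T) (r⁻¹ L) := by
    intro r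
    rw [weight_sum hn r]
    by_cases h : r⁻¹ L = 0
    · rw [h, dlt_self, aGencos_zero]; simp
    · have hb : ((r⁻¹ L : Fin n) : ℕ) ≠ 0 := by
        intro hc
        exact h (by rw [Fin.ext_iff, Fin.val_zero]; exact hc)
      rw [dlt_perm hn hb, aGencos_perm, hTL]
      exact (if_neg h).symm
  have hsum : ∑ r : Equiv.Perm (Fin n), aGencos (aϖ₁ + permAct r aϖlast) u
      = ((n-1).factorial : ℂ) * (1 + ((n:ℂ) - 1) * T) := by
    calc ∑ r : Equiv.Perm (Fin n), aGencos (aϖ₁ + permAct r aϖlast) u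
        = ∑ r : Equiv.Perm (Fin n), (fun i : Fin n => if i = 0 then (1:ℂ) else T) (r⁻¹ L) :=
          Finset.sum_congr rfl fun r _ => step1 r
      _ = ∑ r : Equiv.Perm (Fin n), (fun i : Fin n => if i = 0 then (1:ℂ) else T) (r L) :=
          Fintype.sum_bijective (·⁻¹) inv_involutive.bijective _ _ (fun r => rfl)
      _ = ((n-1).factorial : ℂ) * ∑ i : Fin n, (if i = 0 then (1:ℂ) else T) := by
          exact sum_perm_apply' (by omega) (fun i : Fin n => if i = 0 then (1:ℂ) else T) L
      _ = ((n-1).factorial : ℂ) * (1 + ((n:ℂ) - 1) * T) := by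
          congr 1
          have h : ∀ i : Fin n, (if i = 0 then (1:ℂ) else T) = T + (if i = 0 then 1 - T else 0) := by
            intro i; by_cases h : i = 0 <;> simp [h]
          rw [Finset.sum_congr rfl (fun i _ => h i), Finset.sum_add_distrib, Finset.sum_const,
            Finset.sum_ite_eq' Finset.univ (0 : Fin n) (fun _ => 1 - T)]
          simp only [Finset.card_univ, Fintype.card_fin, Finset.mem_univ, if_true, nsmul_eq_mul]
          ring
  have hmul := aGencos_mul (aϖ₁ : EV n) aϖlast u
  have hN : ((Fintype.card (Equiv.Perm (Fin n)) : ℂ)) = (n : ℂ) * ((n-1).factorial : ℂ) := by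
    rw [Fintype.card_perm, Fintype.card_fin]
    rw [← Nat.mul_factorial_pred (by omega : n ≠ 0)]
    push_cast
    ring
  have hn0 : (n : ℂ) ≠ 0 := Nat.cast_ne_zero.mpr (by omega)
  have hf0 : (((n-1).factorial : ℕ) : ℂ) ≠ 0 := Nat.cast_ne_zero.mpr (Nat.factorial_ne_zero _)
  rw [mul_assoc, hmul, hsum, hN]
  field_simp
  ring

end

/-- For `A_{n−1}`: the Chebyshev identity
`n z₁ z_{n−1} = (n−1) T_{ϖ₁+ϖ_{n−1}} + 1` holds on the Chebyshev image, where moreover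
`z_{n−1} = conj z₁`; consequently `T_{ρ₀} = (n|z₁|² − 1)/(n−1) ≥ −1/(n−1)` on the image,
and the spectral bound gives `χ(Λ(A_{n−1})) ≥ n` for the lattice graph of the coroot
lattice of `A_{n−1}` (avoiding its strict Voronoi vectors `W ρ₀ = {eᵢ − eⱼ : i ≠ j}`). -/
theorem statement13 {n : ℕ} (hn : 2 ≤ n) :
    -- the identity `n·z₁·z_{n−1} = (n−1)·T_{ρ₀} + 1` on the Chebyshev image:
    (∀ u : EV n, (n : ℂ) * aGencos aϖ₁ u * aGencos aϖlast u
        = (n - 1 : ℂ) * aGencos (aϖ₁ + aϖlast) u + 1) ∧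
    -- `z_{n−1}` is the complex conjugate of `z₁` on the image:
    (∀ u : EV n, aGencos aϖlast u = starRingEnd ℂ (aGencos aϖ₁ u)) ∧
    -- hence `T_{ρ₀} = (n|z₁|² − 1)/(n−1) ≥ −1/(n−1)` on the image:
    (∀ u : EV n, (aGencos (aϖ₁ + aϖlast) u : ℂ)
        = (((n * Complex.normSq (aGencos aϖ₁ u) - 1) / (n - 1) : ℝ) : ℂ)) ∧
    (∀ u : EV n, -(1 / (n - 1 : ℝ)) ≤ (aGencos (aϖ₁ + aϖlast) u).re) ∧
    -- the spectral bound: every proper coloring of the lattice graph of `Λ(A_{n−1})`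
    -- uses at least `n` colors:
    (∀ (k : ℕ) (C : (Fin n → ℤ) → Fin k),
      (∀ u v : Fin n → ℤ, (∑ i, u i) = 0 → (∑ i, v i) = 0 →
        (∃ i j : Fin n, i ≠ j ∧
          ∀ t, u t - v t = (if t = i then 1 else 0) - (if t = j then 1 else 0)) →
        C u ≠ C v) → n ≤ k) := by
  haveI : NeZero n := ⟨by omega⟩
  have hne : ((n : ℂ) - 1) ≠ 0 := by
    intro h
    rw [sub_eq_zero] at h
    have : n = 1 := by exact_mod_cast h
    omega
  have hnR : (0:ℝ) < (n : ℝ) - 1 := by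
    have : (2:ℝ) ≤ (n : ℝ) := by exact_mod_cast hn
    linarith
  have p3 : ∀ u : EV n, (aGencos (aϖ₁ + aϖlast) u : ℂ)
      = (((n * Complex.normSq (aGencos aϖ₁ u) - 1) / (n - 1) : ℝ) : ℂ) := by
    intro u
    have h1 := part1 hn u
    have h2 := part2 hn u
    set z := aGencos (aϖ₁ : EV n) u
    have h4 : (n : ℂ) * ((Complex.normSq z : ℝ) : ℂ) = ((n:ℂ) - 1) * aGencos (aϖ₁ + aϖlast) u + 1 := by
      rw [← Complex.mul_conj, ← mul_assoc, ← h2]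
      exact h1
    push_cast
    rw [eq_div_iff hne]
    linear_combination -h4
  refine ⟨part1 hn, part2 hn, p3, ?_, ?_⟩
  · intro u
    rw [p3 u, Complex.ofReal_re]
    have hs : 0 ≤ Complex.normSq (aGencos (aϖ₁ : EV n) u) := Complex.normSq_nonneg _
    have hns : 0 ≤ (n:ℝ) * Complex.normSq (aGencos (aϖ₁ : EV n) u) := by positivity
    rw [show -(1 / ((n:ℝ) - 1)) = (-1) / ((n:ℝ) - 1) by ring]
    rw [div_le_div_iff_of_pos_right hnR]
    linarith
  · intro k C hC
    set w : Fin n → (Fin n → ℤ) := fun i t =>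
      (if t = i then 1 else 0) - (if t = (0 : Fin n) then 1 else 0) with hw
    have hsum : ∀ i, ∑ t, w i t = 0 := by
      intro i
      simp [hw, Finset.sum_sub_distrib, Finset.sum_ite_eq' Finset.univ]
    have hinj : Function.Injective (fun i => C (w i)) := by
      intro i j hij
      by_contra hne'
      exact hC (w i) (w j) (hsum i) (hsum j)
        ⟨i, j, hne', fun t => by simp only [hw]; ring⟩ hij
    have := Fintype.card_le_of_injective _ hinj
    simpa using this
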